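/- There exist a set X of irrational numbers of size 2^ω and a zero-dimensional first countable topology τ on X refining the Euclidean topology such that X = Y ∪ Z where τ agrees with the Euclidean topology on both Y and Z, and (X, τ) has an irreducible base. Consequently χ(X) = nw(X) = ω while w(X) = 2^ω. -/

import Mathlib

open TopologicalSpace Cardinal Set

universe u

section Defs

variable {X : Type u} [TopologicalSpace X]

/-- `B` is a neighbourhood base of `x`: members are open sets containing `x`,
and every open set containing `x` contains a member of `B`. -/
def NbhdBasisAt (B : Set (Set X)) (x : X) : Prop :=
  (∀ U ∈ B, IsOpen U ∧ x ∈ U) ∧ ∀ V : Set X, IsOpen V → x ∈ V → ∃ U ∈ B, U ⊆ V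

/-- The family `F` contains a neighbourhood base of `x`. -/
def ContainsNbhdBasisAt (F : Set (Set X)) (x : X) : Prop :=
  ∀ V : Set X, IsOpen V → x ∈ V → ∃ U ∈ F, x ∈ U ∧ U ⊆ V

/-- Property (*) of a decomposition. -/
def StarProperty (𝒲 : X → Set (Set X)) : Prop :=
  ∀ x y : X, x ≠ y → ∀ U ∈ 𝒲 x, ∀ V ∈ 𝒲 y, x ∈ V → y ∈ U → (V \ U).Nonempty

/-- `𝒰` is an irreducible decomposition of a base of `X`. -/
def IsIrreducibleDecomp (𝒰 : X → Set (Set X)) : Prop :=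
  IsTopologicalBasis (⋃ x, 𝒰 x) ∧ (∀ x, NbhdBasisAt (𝒰 x) x) ∧
    ∀ x : X, ¬ ContainsNbhdBasisAt (⋃ y ∈ {y : X | y ≠ x}, 𝒰 y) x

def HasIrreducibleBase (X : Type u) [TopologicalSpace X] : Prop :=
  ∃ 𝒰 : X → Set (Set X), IsIrreducibleDecomp 𝒰

/-- `f` is a neighbourhood assignment on `Y`. -/
def IsNbhdAssignment (Y : Set X) (f : X → Set X) : Prop :=
  ∀ y ∈ Y, IsOpen (f y) ∧ y ∈ f y

/-- `D_N^f = { y ∈ Y : y ∈ N ⊆ f y }`. -/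
def Dset (Y : Set X) (f : X → Set X) (N : Set X) : Set X :=
  {y | y ∈ Y ∧ y ∈ N ∧ N ⊆ f y}

/-- `Y` is weakly separated (as a subspace of `X`). -/
def WeaklySeparatedSub (Y : Set X) : Prop :=
  ∃ f : X → Set X, IsNbhdAssignment Y f ∧
    ∀ y ∈ Y, ∀ z ∈ Y, y ≠ z → y ∉ f z ∨ z ∉ f y

/-- `Z` is pseudo weakly separated: it contains a weakly separated subspace of the
same cardinality. -/
def PseudoWeaklySeparated (Z : Set X) : Prop :=
  ∃ W ⊆ Z, #W = #Z ∧ WeaklySeparatedSub W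

/-- The weight of a space: least cardinality of a base. -/
noncomputable def weight (X : Type u) [TopologicalSpace X] : Cardinal.{u} :=
  sInf {c | ∃ B : Set (Set X), IsTopologicalBasis B ∧ c = #B}

/-- The character of `X` at `x`: least cardinality of a neighbourhood base at `x`. -/
noncomputable def charAt (x : X) : Cardinal.{u} :=
  sInf {c | ∃ B : Set (Set X), NbhdBasisAt B x ∧ c = #B}

/-- The character of `X`. -/
noncomputable def character (X : Type u) [TopologicalSpace X] : Cardinal.{u} :=
  ⨆ x : X, charAt x

/-- `N` is a network of `X`. -/
def IsNetwork (N : Set (Set X)) : Prop :=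
  ∀ x : X, ∀ U : Set X, IsOpen U → x ∈ U → ∃ M ∈ N, x ∈ M ∧ M ⊆ U

/-- The net weight of `X`: least cardinality of a network. -/
noncomputable def netWeight (X : Type u) [TopologicalSpace X] : Cardinal.{u} :=
  sInf {c | ∃ N : Set (Set X), IsNetwork N ∧ c = #N}

/-- Tkačenko's cardinal function `R`. -/
noncomputable def Rinv (X : Type u) [TopologicalSpace X] : Cardinal.{u} :=
  sSup {c | ∃ Y : Set X, WeaklySeparatedSub Y ∧ c = #Y}

/-- `S` is right-separated: it carries a well-ordering in which every point has an
open neighbourhood avoiding all later points of `S`. -/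
def RightSeparated (S : Set X) : Prop :=
  ∃ r : S → S → Prop, IsWellOrder S r ∧
    ∀ x : S, ∃ U : Set X, IsOpen U ∧ (x : X) ∈ U ∧ ∀ y : S, r x y → (y : X) ∉ U

end Defs

noncomputable section

open Topology Set TopologicalSpace Cardinal

namespace St16


def irrEmbed : {x : ℝ // Irrational x} → ℝ × (ℚ → ℝ) :=
  fun x => (x.1, fun q => (x.1 - q)⁻¹)

lemma continuous_irrEmbed : Continuous irrEmbed := by
  refine continuous_prodMk.mpr ⟨continuous_subtype_val, continuous_pi fun q => ?_⟩
  exact Continuous.inv₀ (by continuity) fun x => sub_ne_zero.2 (x.2.ne_rat q)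

lemma isClosed_range_irrEmbed : IsClosed (range irrEmbed) := by
  have : range irrEmbed = ⋂ q : ℚ, {p : ℝ × (ℚ → ℝ) | (p.1 - q) * p.2 q = 1} := by
    ext p; constructor
    · rintro ⟨x, rfl⟩ ; simp only [mem_iInter, mem_setOf_eq]
      intro q
      exact mul_inv_cancel₀ (sub_ne_zero.2 (x.2.ne_rat q))
    · intro hp
      simp only [mem_iInter, mem_setOf_eq] at hp
      have hirr : Irrational p.1 := by
        rintro ⟨q, hq⟩
        have := hp q
        rw [← hq, sub_self, zero_mul] at this
        exact zero_ne_one this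
      refine ⟨⟨p.1, hirr⟩, ?_⟩
      have : (fun q : ℚ => (p.1 - q)⁻¹) = p.2 := by
        funext q
        have h0 : (p.1 - (q:ℝ)) ≠ 0 := sub_ne_zero.2 (hirr.ne_rat q)
        field_simp
        have := hp q
        linarith [hp q]
      simp only [irrEmbed, this]
  rw [this]
  exact isClosed_iInter fun q => isClosed_eq (Continuous.mul (continuous_fst.sub continuous_const) ((continuous_apply q).comp continuous_snd)) continuous_const

lemma isClosedEmbedding_irrEmbed : Topology.IsClosedEmbedding irrEmbed := by
  refine ⟨⟨?_, fun x y h => ?_⟩, isClosed_range_irrEmbed⟩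
  · exact Topology.IsInducing.of_comp continuous_irrEmbed continuous_fst
      (show Topology.IsInducing (Subtype.val) from Topology.IsInducing.subtypeVal)
  · apply Subtype.ext
    exact congrArg Prod.fst h

instance : PolishSpace {x : ℝ // Irrational x} :=
  isClosedEmbedding_irrEmbed.polishSpace

lemma exists_K : ∃ K : Set ℝ, IsClosed K ∧ (∀ x ∈ K, Irrational x) ∧
    ∃ g : (ℕ → Bool) → ℝ, Function.Injective g ∧ range g = K := by
  have huniv : ¬(univ : Set {x : ℝ // Irrational x}).Countable := by
    intro h
    have h2 : (Set.univ : Set ℝ).Countable := by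
      have : (Set.univ : Set ℝ) ⊆ (Set.range ((↑) : ℚ → ℝ)) ∪ {x | Irrational x} := by
        intro x _
        by_cases hx : Irrational x
        · exact Or.inr hx
        · exact Or.inl (not_not.mp hx)
      refine Set.Countable.mono this ?_
      refine Set.Countable.union (countable_range _) ?_
      have := h.image (Subtype.val)
      simpa using this
    exact Cardinal.not_countable_real h2
  obtain ⟨f, -, hfc, hfi⟩ :=
    IsClosed.exists_nat_bool_injection_of_not_countable (C := (univ : Set {x : ℝ // Irrational x})) isClosed_univ huniv
  refine ⟨Set.range (fun s => (f s).1), ?_, ?_, ⟨fun s => (f s).1, ?_, rfl⟩⟩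
  · have : IsCompact (Set.range (fun s => (f s).1)) :=
      isCompact_range (continuous_subtype_val.comp hfc)
    exact this.isClosed
  · rintro x ⟨s, rfl⟩; exact (f s).2
  · intro s t h
    exact hfi (Subtype.ext h)


def K : Set ℝ := exists_K.choose

lemma K_closed : IsClosed K := exists_K.choose_spec.1
lemma K_irr : ∀ x ∈ K, Irrational x := exists_K.choose_spec.2.1

lemma K_card : #K = 2 ^ ℵ₀ := by
  obtain ⟨g, hgi, hgr⟩ := exists_K.choose_spec.2.2
  apply le_antisymm
  · calc #K ≤ #ℝ := mk_le_mk_of_subset (subset_univ _) |>.trans (by rw [mk_univ])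
    _ = 2 ^ ℵ₀ := by rw [mk_real]; exact (two_power_aleph0).symm
  · have : #(ℕ → Bool) ≤ #K := by
      refine mk_le_of_injective (f := fun s => (⟨g s, hgr.subset ⟨s, rfl⟩⟩ : K)) ?_
      intro s t h
      exact hgi (congrArg Subtype.val h)
    calc (2 : Cardinal) ^ ℵ₀ = #(ℕ → Bool) := by
          rw [mk_arrow, mk_bool, mk_nat, lift_id, lift_id]
      _ ≤ #K := this

/-- every open interval contains a rational subinterval disjoint from `K` -/
lemma K_nwd {u v : ℝ} (h : u < v) :
    ∃ a b : ℚ, u < (a:ℝ) ∧ (a:ℝ) < b ∧ (b:ℝ) < v ∧ Ioo (a:ℝ) b ∩ K = ∅ := by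
  obtain ⟨r, hr1, hr2⟩ := exists_rat_btwn h
  have hrK : (r:ℝ) ∉ K := fun hK => (K_irr _ hK) ⟨r, rfl⟩
  have : IsOpen (Ioo u v ∩ Kᶜ) := (isOpen_Ioo).inter K_closed.isOpen_compl
  obtain ⟨ε, hε, hb⟩ := Metric.isOpen_iff.1 this r ⟨⟨hr1, hr2⟩, hrK⟩
  obtain ⟨a, ha1, ha2⟩ := exists_rat_btwn (show max u ((r:ℝ) - ε) < r from
    max_lt hr1 (by linarith))
  obtain ⟨b, hb1, hb2⟩ := exists_rat_btwn (show (r:ℝ) < min v ((r:ℝ) + ε) from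
    lt_min hr2 (by linarith))
  have hau : u < (a:ℝ) := lt_of_le_of_lt (le_max_left _ _) ha1
  have hae : (r:ℝ) - ε < a := lt_of_le_of_lt (le_max_right _ _) ha1
  have hbv : (b:ℝ) < v := lt_of_lt_of_le hb2 (min_le_left _ _)
  have hbe : (b:ℝ) < r + ε := lt_of_lt_of_le hb2 (min_le_right _ _)
  have hsub : Ioo (a:ℝ) b ⊆ Kᶜ := by
    intro x hx
    have hxball : x ∈ Metric.ball (r:ℝ) ε := by
      rw [Metric.mem_ball, Real.dist_eq, abs_lt]
      constructor <;> [linarith [hx.1]; linarith [hx.2]]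
    exact (hb hxball).2
  refine ⟨a, b, hau, ha2.trans hb1, hbv, ?_⟩
  rw [eq_empty_iff_forall_notMem]
  exact fun x hx => (hsub hx.1) hx.2

def Zset : Set ℝ := {x | (∃ q : ℚ, x = (q:ℝ) + Real.sqrt 2) ∧ x ∉ K}

lemma Z_irr : ∀ z ∈ Zset, Irrational z := by
  rintro z ⟨⟨q, rfl⟩, -⟩
  exact (irrational_sqrt_two.ratCast_add q)

lemma Z_disjoint_K : ∀ z ∈ Zset, z ∉ K := fun _ h => h.2

lemma Z_dense {u v : ℝ} (h : u < v) (hK : Ioo u v ∩ K = ∅) :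
    ∃ z ∈ Zset, z ∈ Ioo u v := by
  obtain ⟨q, hq1, hq2⟩ := exists_rat_btwn (show u - Real.sqrt 2 < v - Real.sqrt 2 by linarith)
  refine ⟨(q:ℝ) + Real.sqrt 2, ⟨⟨q, rfl⟩, ?_⟩, by constructor <;> linarith⟩
  intro hmem
  have : ((q:ℝ) + Real.sqrt 2) ∈ Ioo u v ∩ K := ⟨⟨by linarith, by linarith⟩, hmem⟩
  rw [hK] at this
  exact notMem_empty _ this

lemma Z_countable : Zset.Countable := by
  have : Zset ⊆ range (fun q : ℚ => (q:ℝ) + Real.sqrt 2) := by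
    rintro z ⟨⟨q, rfl⟩, -⟩; exact ⟨q, rfl⟩
  exact (countable_range _).mono this

def Xset : Set ℝ := K ∪ Zset

lemma X_irr : ∀ x ∈ Xset, Irrational x := by
  rintro x (h | h); exacts [K_irr x h, Z_irr x h]

lemma X_card : #Xset = 2 ^ ℵ₀ := by
  apply le_antisymm
  · calc #Xset ≤ #ℝ := mk_le_mk_of_subset (subset_univ _) |>.trans (by rw [mk_univ])
    _ = 2 ^ ℵ₀ := by rw [mk_real]; rfl
  · rw [← K_card]
    exact mk_le_mk_of_subset subset_union_left

/-- choice of the rational intervals `I^y_n`; defined for every real `y`. -/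
lemma exists_I (y : ℝ) (n : ℕ) :
    ∃ p : ℚ × ℚ, (y + 1/(n+2) < p.1) ∧ ((p.1:ℝ) < p.2) ∧ ((p.2:ℝ) < y + 1/(n+1)) ∧
      Ioo (p.1:ℝ) p.2 ∩ K = ∅ := by
  have h1 : y + 1/(n+2:ℝ) < y + 1/(n+1:ℝ) := by
    have : (0:ℝ) < n + 1 := by positivity
    have : (1:ℝ)/(n+2) < 1/(n+1) := by
      apply one_div_lt_one_div_of_lt <;> [positivity; linarith]
    linarith
  obtain ⟨a, b, h2, h3, h4, h5⟩ := K_nwd h1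
  exact ⟨(a, b), h2, h3, h4, h5⟩

def Ia (y : ℝ) (n : ℕ) : ℚ := (exists_I y n).choose.1
def Ib (y : ℝ) (n : ℕ) : ℚ := (exists_I y n).choose.2

lemma Ia_gt (y : ℝ) (n : ℕ) : y + 1/(n+2) < Ia y n := (exists_I y n).choose_spec.1
lemma Ia_lt_Ib (y : ℝ) (n : ℕ) : ((Ia y n : ℝ)) < Ib y n := (exists_I y n).choose_spec.2.1
lemma Ib_lt (y : ℝ) (n : ℕ) : (Ib y n : ℝ) < y + 1/(n+1) := (exists_I y n).choose_spec.2.2.1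
lemma I_disjoint_K (y : ℝ) (n : ℕ) : Ioo ((Ia y n : ℝ)) (Ib y n) ∩ K = ∅ :=
  (exists_I y n).choose_spec.2.2.2

def I (y : ℝ) (n : ℕ) : Set ℝ := Ioo ((Ia y n : ℝ)) (Ib y n)

def J (y : ℝ) : Set ℝ := ⋃ n, I y n

lemma I_subset (y : ℝ) (n : ℕ) : I y n ⊆ Ioo (y + 1/(n+2)) (y + 1/(n+1)) := by
  intro x hx
  exact ⟨(Ia_gt y n).trans hx.1, hx.2.trans (Ib_lt y n)⟩

lemma I_pos (y : ℝ) (n : ℕ) : ∀ x ∈ I y n, y < x ∧ x < y + 1/(n+1) := by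
  intro x hx
  have h := I_subset y n hx
  have : (0:ℝ) < 1/(n+2) := by positivity
  exact ⟨by linarith [h.1], h.2⟩

lemma J_subset (y : ℝ) : J y ⊆ Ioo y (y + 1) := by
  rintro x ⟨s, ⟨n, rfl⟩, hx⟩
  have := I_pos y n x hx
  have h1 : (1:ℝ)/(n+1) ≤ 1 := by
    rw [div_le_one (by positivity)]; linarith [Nat.cast_nonneg (α := ℝ) n]
  exact ⟨this.1, by linarith [this.2]⟩

lemma not_mem_J_self (y : ℝ) : y ∉ J y := fun h => lt_irrefl y (J_subset y h).1

lemma J_disjoint_K (y : ℝ) : J y ∩ K = ∅ := by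
  rw [eq_empty_iff_forall_notMem]
  rintro x ⟨⟨s, ⟨n, rfl⟩, hx⟩, hK⟩
  have : x ∈ I y n ∩ K := ⟨hx, hK⟩
  rw [show I y n ∩ K = Ioo ((Ia y n : ℝ)) (Ib y n) ∩ K from rfl, I_disjoint_K] at this
  exact notMem_empty _ this

lemma closure_J (y : ℝ) :
    closure (J y) ⊆ {y} ∪ ⋃ n, Icc ((Ia y n : ℝ)) (Ib y n) := by
  intro x hx
  by_contra hmem
  simp only [mem_union, mem_singleton_iff, mem_iUnion, not_or, not_exists] at hmem
  obtain ⟨hxy, hxn⟩ := hmem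
  -- x ∈ closure J y ⊆ [y, y+1]
  have hxcl : x ∈ Icc y (y + 1) := by
    have : closure (J y) ⊆ closure (Ioo y (y+1)) := closure_mono (J_subset y)
    have h2 := this hx
    rwa [closure_Ioo (by norm_num : y ≠ y + 1)] at h2
  have hxgty : y < x := lt_of_le_of_ne hxcl.1 (Ne.symm hxy)
  -- choose N with 1/(N+1) < x - y
  obtain ⟨N, hN⟩ := exists_nat_one_div_lt (show 0 < x - y by linarith)
  -- distance from x to each of the finitely many intervals n ≤ N and to the tail
  have key : ∀ n, ∃ δ > 0, Metric.ball x δ ∩ I y n = ∅ := by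
    intro n
    by_cases hn : n ≤ N
    · -- x not in Icc, closed set
      have : x ∈ (Icc ((Ia y n : ℝ)) (Ib y n))ᶜ := hxn n
      obtain ⟨δ, hδ, hball⟩ := Metric.isOpen_iff.1 isClosed_Icc.isOpen_compl x this
      exact ⟨δ, hδ, eq_empty_iff_forall_notMem.2 fun w ⟨hw1, hw2⟩ =>
        (hball hw1) (Ioo_subset_Icc_self hw2)⟩
    · -- tail: I y n ⊆ (y, y + 1/(n+1)) and 1/(n+1) ≤ 1/(N+1) < x - y
      push_neg at hn
      refine ⟨x - y - 1/(N+1+1), by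
        have h1 : (1:ℝ)/(N+1+1) < 1/(N+1) := by
          apply one_div_lt_one_div_of_lt <;> [positivity; linarith]
        linarith, ?_⟩
      rw [eq_empty_iff_forall_notMem]
      rintro w ⟨hw1, hw2⟩
      have h3 := I_pos y n w hw2
      have h4 : (1:ℝ)/(n+1) ≤ 1/(N+1+1) := by
        apply one_div_le_one_div_of_le
        · positivity
        · have : (N:ℝ) + 1 ≤ n := by exact_mod_cast hn
          linarith
      rw [Metric.mem_ball, Real.dist_eq, abs_lt] at hw1
      have : w < y + 1/(N+1+1) := by linarith [h3.2]
      linarith [hw1.1]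
  -- also distance to {y}? not needed since intervals all in (y, ·) and tail handled: but
  -- closure point must be approximated within min over n ≤ N and tail bound; make finite min
  -- δ := min over n ∈ range (N+1) of the δ's, and tail bound handles n > N simultaneously
  classical
  choose δ hδpos hδ using key
  set δ₀ : ℝ := min ((Finset.range (N+1)).inf' (by simp) δ) (x - y - 1/(N+1+1)) with hδ₀
  have hδ₀pos : 0 < δ₀ := by
    apply lt_min
    · rw [Finset.lt_inf'_iff]
      exact fun n _ => hδpos n
    · have h1 : (1:ℝ)/(N+1+1) < 1/(N+1) := by
        apply one_div_lt_one_div_of_lt <;> [positivity; linarith]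
      linarith
  obtain ⟨w, hwJ, hwd⟩ := Metric.mem_closure_iff.1 hx δ₀ hδ₀pos
  obtain ⟨s, ⟨n, rfl⟩, hwn⟩ := hwJ
  by_cases hn : n ≤ N
  · have h1 : δ₀ ≤ δ n := le_trans (min_le_left _ _) (Finset.inf'_le _ (by simp; omega))
    have : w ∈ Metric.ball x (δ n) ∩ I y n := by
      refine ⟨?_, hwn⟩
      rw [Metric.mem_ball, Real.dist_eq, abs_sub_comm]
      rw [Real.dist_eq] at hwd
      calc |x - w| < δ₀ := hwd
        _ ≤ δ n := h1
    rw [hδ n] at this; exact this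
  · push_neg at hn
    have h3 := I_pos y n w hwn
    have h4 : (1:ℝ)/(n+1) ≤ 1/(N+1+1) := by
      apply one_div_le_one_div_of_le
      · positivity
      · have : (N:ℝ) + 1 ≤ n := by exact_mod_cast hn
        linarith
    have h5 : δ₀ ≤ x - y - 1/(N+1+1) := min_le_right _ _
    rw [Real.dist_eq, abs_lt] at hwd
    have : w < y + 1/(N+1+1) := by linarith [h3.2]
    linarith [hwd.1]

/-- L1 : an irrational number other than `y` and outside `J y` is outside the closure. -/
lemma not_mem_closure_J {w y : ℝ} (hirr : Irrational w) (hne : w ≠ y) (hmem : w ∉ J y) :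
    w ∉ closure (J y) := by
  intro hcl
  rcases closure_J y hcl with h | h
  · exact hne h
  · obtain ⟨s, ⟨n, rfl⟩, h⟩ := h
    rcases lt_or_eq_of_le h.1 with h1 | h1
    · rcases lt_or_eq_of_le h.2 with h2 | h2
      · exact hmem ⟨I y n, ⟨n, rfl⟩, h1, h2⟩
      · exact hirr ⟨Ib y n, h2.symm⟩
    · exact hirr ⟨Ia y n, h1⟩

/-- points of `Z` inside `J y`, within a given interval around `y`, avoiding a closed set. -/
lemma Z_point (y : ℝ) {c d : ℝ} (hy : y ∈ Ioo c d) {T : Set ℝ} (hT : IsClosed T)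
    (hyT : y ∉ T) : ∃ z ∈ Zset, z ∈ Ioo c d ∧ z ∈ J y ∧ z ∉ T := by
  obtain ⟨ε, hε, hball⟩ := Metric.isOpen_iff.1 hT.isOpen_compl y hyT
  obtain ⟨n, hn⟩ := exists_nat_one_div_lt (show 0 < min ε (d - y) by
    exact lt_min hε (by linarith [hy.2]))
  have hIn : I y n ⊆ Ioo c d ∩ Tᶜ := by
    intro w hw
    have h1 := I_pos y n w hw
    have h2 : (1:ℝ)/(n+1) < min ε (d - y) := hn
    constructor
    · exact ⟨lt_trans hy.1 h1.1, by have := min_le_right ε (d-y); linarith [h1.2]⟩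
    · apply hball
      rw [Metric.mem_ball, Real.dist_eq, abs_lt]
      have := min_le_left ε (d-y)
      constructor <;> [linarith [h1.1]; linarith [h1.2]]
  obtain ⟨z, hz1, hz2⟩ := Z_dense (Ia_lt_Ib y n) (I_disjoint_K y n)
  exact ⟨z, hz1, (hIn hz2).1, ⟨I y n, ⟨n, rfl⟩, hz2⟩, (hIn hz2).2⟩


/-! ### The space and its topology -/

def XC : Type := ↥Xset

def ev : XC → ℝ := Subtype.val

lemma ev_inj : Function.Injective ev := Subtype.val_injective

lemma ev_mem (x : XC) : ev x ∈ Xset := Subtype.prop (p := fun r => r ∈ Xset) x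

lemma ev_irr (x : XC) : Irrational (ev x) := X_irr _ (ev_mem x)

lemma ev_cases (x : XC) : ev x ∈ K ∨ (ev x ∈ Zset ∧ ev x ∉ K) := by
  rcases ev_mem x with h | h
  · exact Or.inl h
  · exact Or.inr ⟨h, h.2⟩

def mkX (z : ℝ) (hz : z ∈ Zset) : XC := (⟨z, Or.inr hz⟩ : ↥Xset)

lemma ev_mkX (z : ℝ) (hz : z ∈ Zset) : ev (mkX z hz) = z := rfl

def gI (a b : ℚ) : Set XC := ev ⁻¹' (Ioo (a:ℝ) b)

def gY (a b : ℚ) (y : ℝ) : Set XC := ev ⁻¹' (Ioo (a:ℝ) b \ J y)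

def gens : Set (Set XC) :=
  {S | (∃ a b : ℚ, S = gI a b) ∨ (∃ a b : ℚ, ∃ y ∈ K, S = gY a b y)}

instance tXC : TopologicalSpace XC := generateFrom gens

def tE : TopologicalSpace XC := TopologicalSpace.induced ev inferInstance

lemma gens_open {G : Set XC} (hG : G ∈ gens) : IsOpen G :=
  isOpen_generateFrom_of_mem hG

/-- rational interval around a point inside an open set -/
lemma rat_interval {U : Set ℝ} (hU : IsOpen U) {x : ℝ} (hx : x ∈ U) :
    ∃ a b : ℚ, x ∈ Ioo (a:ℝ) b ∧ Ioo (a:ℝ) b ⊆ U := by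
  obtain ⟨ε, hε, hball⟩ := Metric.isOpen_iff.1 hU x hx
  obtain ⟨a, ha1, ha2⟩ := exists_rat_btwn (show x - ε < x by linarith)
  obtain ⟨b, hb1, hb2⟩ := exists_rat_btwn (show x < x + ε by linarith)
  refine ⟨a, b, ⟨ha2, hb1⟩, fun w hw => hball ?_⟩
  rw [Metric.mem_ball, Real.dist_eq, abs_lt]
  constructor <;> [linarith [hw.1]; linarith [hw.2]]

/-- the canonical neighbourhoods -/
def gCan (x : XC) (a b : ℚ) : Set XC :=
  {w | ev w ∈ Ioo ((a:ℝ)) b ∧ (ev x ∈ K → ev w ∉ J (ev x))}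

lemma gCan_eq_pos {x : XC} (hK : ev x ∈ K) (a b : ℚ) : gCan x a b = gY a b (ev x) := by
  ext w
  simp only [gCan, gY, mem_setOf_eq, mem_preimage, mem_diff]
  exact ⟨fun h => ⟨h.1, h.2 hK⟩, fun h => ⟨h.1, fun _ => h.2⟩⟩

lemma gCan_eq_neg {x : XC} (hK : ev x ∉ K) (a b : ℚ) : gCan x a b = gI a b := by
  ext w
  simp only [gCan, gI, mem_setOf_eq, mem_preimage]
  exact ⟨fun h => h.1, fun h => ⟨h, fun h' => absurd h' hK⟩⟩

lemma gCan_mem_gens (x : XC) (a b : ℚ) : gCan x a b ∈ gens := by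
  by_cases h : ev x ∈ K
  · rw [gCan_eq_pos h]; exact Or.inr ⟨a, b, ev x, h, rfl⟩
  · rw [gCan_eq_neg h]; exact Or.inl ⟨a, b, rfl⟩

lemma gCan_open (x : XC) (a b : ℚ) : IsOpen (gCan x a b) := gens_open (gCan_mem_gens x a b)

lemma mem_gCan {x : XC} {a b : ℚ} (h : ev x ∈ Ioo (a:ℝ) b) : x ∈ gCan x a b := by
  refine ⟨h, fun hK hJ => ?_⟩
  have h2 : ev x ∈ J (ev x) ∩ K := ⟨hJ, hK⟩
  rw [J_disjoint_K] at h2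
  exact notMem_empty _ h2

lemma mem_gCan' {x : XC} {a b : ℚ} (h : x ∈ gCan x a b) : ev x ∈ Ioo (a:ℝ) b := h.1

lemma gCan_subset_interval (x : XC) (a b : ℚ) : gCan x a b ⊆ gI a b := fun _ hw => hw.1

lemma gCan_mono {x : XC} {a b a' b' : ℚ} (h : Ioo ((a':ℝ)) b' ⊆ Ioo ((a:ℝ)) b) :
    gCan x a' b' ⊆ gCan x a b := fun w hw => ⟨h hw.1, hw.2⟩

/-- MAIN shrinking lemma -/
lemma gCan_shrink {x : XC} {G : Set XC} (hG : G ∈ gens) (hx : x ∈ G) :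
    ∃ a b : ℚ, ev x ∈ Ioo ((a:ℝ)) b ∧ gCan x a b ⊆ G := by
  rcases hG with ⟨c, d, rfl⟩ | ⟨c, d, y, hyK, rfl⟩
  · obtain ⟨a, b, h1, h2⟩ := rat_interval isOpen_Ioo hx
    exact ⟨a, b, h1, (gCan_subset_interval x a b).trans (preimage_mono h2)⟩
  · have hxIoo : ev x ∈ Ioo ((c:ℝ)) d := hx.1
    have hxJ : ev x ∉ J y := hx.2
    by_cases hxy : ev x = y
    · obtain ⟨a, b, h1, h2⟩ := rat_interval isOpen_Ioo hxIoo
      refine ⟨a, b, h1, ?_⟩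
      rw [show gCan x a b = gY a b y from hxy ▸ gCan_eq_pos (hxy ▸ hyK) a b]
      exact fun w hw => ⟨h2 hw.1, hw.2⟩
    · have hcl : ev x ∉ closure (J y) := not_mem_closure_J (ev_irr x) hxy hxJ
      have hopen : IsOpen (Ioo ((c:ℝ)) d ∩ (closure (J y))ᶜ) :=
        isOpen_Ioo.inter isClosed_closure.isOpen_compl
      obtain ⟨a, b, h1, h2⟩ := rat_interval hopen ⟨hxIoo, hcl⟩
      refine ⟨a, b, h1, fun w hw => ?_⟩
      have hw' : ev w ∈ Ioo ((a:ℝ)) b := gCan_subset_interval x a b hw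
      exact ⟨(h2 hw').1, fun hJ => (h2 hw').2 (subset_closure hJ)⟩

lemma gens_basis : IsTopologicalBasis gens := by
  refine ⟨?_, ?_, rfl⟩
  · rintro G₁ hG₁ G₂ hG₂ x ⟨hx1, hx2⟩
    obtain ⟨a₁, b₁, h₁, hs₁⟩ := gCan_shrink hG₁ hx1
    obtain ⟨a₂, b₂, h₂, hs₂⟩ := gCan_shrink hG₂ hx2
    refine ⟨gCan x (max a₁ a₂) (min b₁ b₂), gCan_mem_gens _ _ _, ?_, ?_⟩
    · apply mem_gCan
      simp only [mem_Ioo, Rat.cast_max, Rat.cast_min, max_lt_iff, lt_min_iff]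
      exact ⟨⟨h₁.1, h₂.1⟩, h₁.2, h₂.2⟩
    · intro w hw
      have m1 : gCan x (max a₁ a₂) (min b₁ b₂) ⊆ gCan x a₁ b₁ := by
        apply gCan_mono
        intro r hr
        simp only [mem_Ioo, Rat.cast_max, Rat.cast_min, max_lt_iff, lt_min_iff] at hr
        exact ⟨hr.1.1, hr.2.1⟩
      have m2 : gCan x (max a₁ a₂) (min b₁ b₂) ⊆ gCan x a₂ b₂ := by
        apply gCan_mono
        intro r hr
        simp only [mem_Ioo, Rat.cast_max, Rat.cast_min, max_lt_iff, lt_min_iff] at hr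
        exact ⟨hr.1.2, hr.2.2⟩
      exact ⟨hs₁ (m1 hw), hs₂ (m2 hw)⟩
  · rw [sUnion_eq_univ_iff]
    intro x
    obtain ⟨a, ha⟩ := exists_rat_lt (ev x)
    obtain ⟨b, hb⟩ := exists_rat_gt (ev x)
    exact ⟨gI a b, Or.inl ⟨a, b, rfl⟩, ha, hb⟩

/-- canonical neighbourhoods inside any open set -/
lemma exists_gCan_sub {V : Set XC} (hV : IsOpen V) {x : XC} (hx : x ∈ V) :
    ∃ a b : ℚ, ev x ∈ Ioo ((a:ℝ)) b ∧ gCan x a b ⊆ V := by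
  obtain ⟨G, hG, hxG, hGV⟩ := gens_basis.exists_subset_of_mem_open hx hV
  obtain ⟨a, b, h1, h2⟩ := gCan_shrink hG hxG
  exact ⟨a, b, h1, h2.trans hGV⟩

lemma tXC_le_tE : tXC ≤ tE := by
  rw [TopologicalSpace.le_def]
  intro s hs
  obtain ⟨u, hu, rfl⟩ := hs
  rw [gens_basis.isOpen_iff]
  intro x hx
  obtain ⟨a, b, h1, h2⟩ := rat_interval hu hx
  exact ⟨gI a b, Or.inl ⟨a, b, rfl⟩, h1, fun w hw => h2 hw⟩

lemma E_open {s : Set XC} (hs : IsOpen[tE] s) : IsOpen s := by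
  have h := tXC_le_tE
  rw [TopologicalSpace.le_def] at h
  exact h s hs

lemma E_closed {s : Set XC} (hs : IsClosed[tE] s) : IsClosed s :=
  isOpen_compl_iff.1 (E_open ((@isOpen_compl_iff XC s tE).2 hs))

lemma ev_preimage_open {u : Set ℝ} (hu : IsOpen u) : IsOpen (ev ⁻¹' u) :=
  E_open ⟨u, hu, rfl⟩

lemma ev_preimage_closed {u : Set ℝ} (hu : IsClosed u) : IsClosed (ev ⁻¹' u) := by
  rw [← isOpen_compl_iff]
  exact ev_preimage_open hu.isOpen_compl

/-! ### clopen basis -/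

lemma gens_clopen {G : Set XC} (hG : G ∈ gens) : IsClopen G := by
  constructor
  · -- closed: complement is open
    rw [← isOpen_compl_iff]
    rw [gens_basis.isOpen_iff]
    intro x hx
    rcases hG with ⟨c, d, rfl⟩ | ⟨c, d, y, hyK, rfl⟩
    · -- interval type
      simp only [mem_compl_iff, gI, mem_preimage, mem_Ioo, not_and, not_lt] at hx
      by_cases h1 : (c:ℝ) < ev x
      · have h2 : (d:ℝ) ≤ ev x := hx h1
        have h3 : (d:ℝ) < ev x := lt_of_le_of_ne h2 (fun h => (ev_irr x) ⟨d, h⟩)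
        obtain ⟨p, hp⟩ := exists_rat_gt (ev x)
        refine ⟨gI d p, Or.inl ⟨d, p, rfl⟩, ⟨h3, hp⟩, ?_⟩
        rintro w ⟨hw1, -⟩
        simp only [mem_compl_iff, gI, mem_preimage, mem_Ioo, not_and, not_lt]
        intro hcw
        exact le_of_lt hw1
      · push_neg at h1
        have h3 : ev x < (c:ℝ) := lt_of_le_of_ne h1 (fun h => (ev_irr x) ⟨c, h.symm⟩)
        obtain ⟨p, hp⟩ := exists_rat_lt (ev x)
        refine ⟨gI p c, Or.inl ⟨p, c, rfl⟩, ⟨hp, h3⟩, ?_⟩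
        rintro w ⟨-, hw2⟩
        simp only [mem_compl_iff, gI, mem_preimage, mem_Ioo, not_and, not_lt]
        intro hcw
        exact absurd hcw (not_lt.2 (le_of_lt hw2))
    · -- gY type
      simp only [mem_compl_iff, gY, mem_preimage, mem_diff, mem_Ioo, not_and, not_not] at hx
      by_cases hIoo : ev x ∈ Ioo ((c:ℝ)) d
      · -- then ev x ∈ J y
        have hJ : ev x ∈ J y := hx ⟨hIoo.1, hIoo.2⟩
        obtain ⟨s, ⟨n, rfl⟩, hn⟩ := hJ
        refine ⟨gI (Ia y n) (Ib y n), Or.inl ⟨_, _, rfl⟩, hn, ?_⟩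
        intro w hw
        simp only [mem_compl_iff, gY, mem_preimage, mem_diff, not_and, not_not]
        intro _
        exact ⟨I y n, ⟨n, rfl⟩, hw⟩
      · simp only [mem_Ioo, not_and, not_lt] at hIoo
        by_cases h1 : (c:ℝ) < ev x
        · have h3 : (d:ℝ) < ev x :=
            lt_of_le_of_ne (hIoo h1) (fun h => (ev_irr x) ⟨d, h⟩)
          obtain ⟨p, hp⟩ := exists_rat_gt (ev x)
          refine ⟨gI d p, Or.inl ⟨d, p, rfl⟩, ⟨h3, hp⟩, ?_⟩
          rintro w ⟨hw1, -⟩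
          simp only [mem_compl_iff, gY, mem_preimage, mem_diff, mem_Ioo, not_and, not_not]
          intro h
          exact absurd h.2 (not_lt.2 (le_of_lt hw1))
        · push_neg at h1
          have h3 : ev x < (c:ℝ) := lt_of_le_of_ne h1 (fun h => (ev_irr x) ⟨c, h.symm⟩)
          obtain ⟨p, hp⟩ := exists_rat_lt (ev x)
          refine ⟨gI p c, Or.inl ⟨p, c, rfl⟩, ⟨hp, h3⟩, ?_⟩
          rintro w ⟨-, hw2⟩
          simp only [mem_compl_iff, gY, mem_preimage, mem_diff, mem_Ioo, not_and, not_not]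
          intro h
          exact absurd h.1 (not_lt.2 (le_of_lt hw2))
  · exact gens_open hG

/-! ### first countability -/

lemma nhds_basis (x : XC) :
    (nhds x).HasBasis (fun p : ℚ × ℚ => ev x ∈ Ioo ((p.1:ℝ)) p.2)
      (fun p => gCan x p.1 p.2) := by
  rw [Filter.hasBasis_iff]
  intro t
  constructor
  · intro ht
    rw [mem_nhds_iff] at ht
    obtain ⟨V, hVt, hV, hxV⟩ := ht
    obtain ⟨a, b, h1, h2⟩ := exists_gCan_sub hV hxV
    exact ⟨(a, b), h1, h2.trans hVt⟩
  · rintro ⟨⟨a, b⟩, h1, h2⟩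
    exact Filter.mem_of_superset ((gCan_open x a b).mem_nhds (mem_gCan h1)) h2

instance firstCountableXC : FirstCountableTopology XC :=
  ⟨fun x => (nhds_basis x).isCountablyGenerated⟩

/-! ### T1 and non-isolation -/

lemma singleton_closed (w : XC) : IsClosed ({w} : Set XC) := by
  have : ({w} : Set XC) = ev ⁻¹' {ev w} := by
    ext u
    simp only [mem_singleton_iff, mem_preimage]
    exact ⟨fun h => h ▸ rfl, fun h => ev_inj h⟩
  rw [this]
  exact ev_preimage_closed isClosed_singleton

lemma not_isolated {x : XC} {V : Set XC} (hV : IsOpen V) (hx : x ∈ V) :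
    ∃ w ∈ V, w ≠ x := by
  obtain ⟨a, b, h1, h2⟩ := exists_gCan_sub hV hx
  obtain ⟨p, q, hp1, hpq, hq1, hK⟩ := K_nwd h1.1
  obtain ⟨z, hz, hzIoo⟩ := Z_dense hpq hK
  have hzx : z < ev x := hzIoo.2.trans hq1
  refine ⟨mkX z hz, h2 ⟨?_, ?_⟩, ?_⟩
  · rw [ev_mkX]
    exact ⟨hp1.trans hzIoo.1, hzx.trans h1.2⟩
  · intro hK' hJ
    rw [ev_mkX] at hJ
    exact absurd (J_subset (ev x) hJ).1 (not_lt.2 (le_of_lt hzx))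
  · intro h
    rw [← ev_mkX z hz, h] at hzx
    exact lt_irrefl _ hzx

/-! ### the irreducible decomposition -/

def zf : ℕ → ℝ := fun n => (((Denumerable.eqv ℚ).symm n : ℚ) : ℝ) + Real.sqrt 2

lemma zf_inj : Function.Injective zf := by
  intro m n h
  have h2 : ((((Denumerable.eqv ℚ).symm m : ℚ)) : ℝ) = (((Denumerable.eqv ℚ).symm n : ℚ) : ℝ) := by
    unfold zf at h; linarith
  have h3 : ((Denumerable.eqv ℚ).symm m : ℚ) = ((Denumerable.eqv ℚ).symm n : ℚ) := by
    exact_mod_cast h2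
  exact (Denumerable.eqv ℚ).symm.injective h3

open scoped Classical in
def rk (r : ℝ) : ℕ :=
  if h : ∃ q : ℚ, r = (q:ℝ) + Real.sqrt 2 then (Denumerable.eqv ℚ) h.choose else 0

lemma zf_rk {r : ℝ} (hr : r ∈ Zset) : zf (rk r) = r := by
  obtain ⟨⟨q, hq⟩, -⟩ := hr
  have h : ∃ q : ℚ, r = (q:ℝ) + Real.sqrt 2 := ⟨q, hq⟩
  rw [rk, dif_pos h, zf]
  simp only [Equiv.symm_apply_apply]
  exact h.choose_spec.symm

def Fset (n : ℕ) : Set XC := {w | ∃ k, k < n ∧ ev w = zf k}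

lemma Fset_closed (n : ℕ) : IsClosed (Fset n) := by
  have : Fset n = ⋃ k ∈ Finset.range n, ev ⁻¹' {zf k} := by
    ext w
    simp only [Fset, mem_setOf_eq, mem_iUnion, mem_preimage, mem_singleton_iff,
      Finset.mem_range]
    tauto
  rw [this]
  apply isClosed_biUnion_finset
  intro k _
  exact ev_preimage_closed isClosed_singleton

def U1 (x : XC) : Set (Set XC) :=
  {S | (ev x ∈ K ∧ ∃ a b : ℚ, ev x ∈ Ioo ((a:ℝ)) b ∧ S = gY a b (ev x)) ∨
       (ev x ∉ K ∧ ∃ a b : ℚ, ev x ∈ Ioo ((a:ℝ)) b ∧ Ioo ((a:ℝ)) b ∩ K = ∅ ∧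
          S = gI a b \ Fset (rk (ev x)))}

lemma U1_open_mem {x : XC} {S : Set XC} (hS : S ∈ U1 x) : IsOpen S ∧ x ∈ S := by
  rcases hS with ⟨hK, a, b, hab, rfl⟩ | ⟨hK, a, b, hab, hKd, rfl⟩
  · constructor
    · exact gens_open (Or.inr ⟨a, b, ev x, hK, rfl⟩)
    · refine ⟨hab, fun hJ => ?_⟩
      have h2 : ev x ∈ J (ev x) ∩ K := ⟨hJ, hK⟩
      rw [J_disjoint_K] at h2
      exact notMem_empty _ h2
  · constructor
    · exact (gens_open (Or.inl ⟨a, b, rfl⟩)).sdiff (Fset_closed _)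
    · refine ⟨hab, fun hF => ?_⟩
      obtain ⟨k, hk, hke⟩ := hF
      have hxZ : ev x ∈ Zset := by
        rcases ev_cases x with h | h
        · exact absurd h hK
        · exact h.1
      have h5 : zf (rk (ev x)) = ev x := zf_rk hxZ
      have h6 : rk (ev x) = k := zf_inj (h5.trans hke)
      omega

lemma U1_nbhd (x : XC) : NbhdBasisAt (U1 x) x := by
  constructor
  · exact fun U hU => U1_open_mem hU
  · intro V hV hxV
    obtain ⟨a, b, h1, h2⟩ := exists_gCan_sub hV hxV
    by_cases hK : ev x ∈ K
    · refine ⟨gY a b (ev x), Or.inl ⟨hK, a, b, h1, rfl⟩, ?_⟩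
      rw [← gCan_eq_pos hK]
      exact h2
    · -- shrink to avoid K
      have hopen : IsOpen (Ioo ((a:ℝ)) b ∩ Kᶜ) := isOpen_Ioo.inter K_closed.isOpen_compl
      obtain ⟨a', b', h3, h4⟩ := rat_interval hopen ⟨h1, hK⟩
      refine ⟨gI a' b' \ Fset (rk (ev x)), Or.inr ⟨hK, a', b', h3, ?_, rfl⟩, ?_⟩
      · rw [eq_empty_iff_forall_notMem]
        exact fun r hr => (h4 hr.1).2 hr.2
      · intro w hw
        apply h2
        rw [gCan_eq_neg hK]
        exact (h4 hw.1).1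
      
lemma U1_basis : IsTopologicalBasis (⋃ x, U1 x) := by
  apply isTopologicalBasis_of_isOpen_of_nhds
  · intro u hu
    obtain ⟨s, ⟨x, rfl⟩, hs⟩ := hu
    exact (U1_open_mem hs).1
  · intro x u hxu hu
    obtain ⟨U, hU, hUu⟩ := (U1_nbhd x).2 u hu hxu
    exact ⟨U, mem_iUnion.2 ⟨x, hU⟩, (U1_open_mem hU).2, hUu⟩

lemma U1_star : StarProperty U1 := by
  intro x x' hne U hU V hV hxV hx'U
  have hevne : ev x ≠ ev x' := fun h => hne (ev_inj h)
  rcases hU with ⟨hK, a, b, hab, rfl⟩ | ⟨hK, a, b, hab, hKd, rfl⟩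
  · rcases hV with ⟨hK', c, d, hcd, rfl⟩ | ⟨hK', c, d, hcd, hKd', rfl⟩
    · -- both in K : the main case
      have hxV' : ev x ∈ Ioo ((c:ℝ)) d \ J (ev x') := hxV
      have hT : IsClosed (closure (J (ev x'))) := isClosed_closure
      have hxT : ev x ∉ closure (J (ev x')) :=
        not_mem_closure_J (ev_irr x) hevne hxV'.2
      obtain ⟨z, hz, hzIoo, hzJ, hzT⟩ := Z_point (ev x) hxV'.1 hT hxT
      refine ⟨mkX z hz, ⟨?_, ?_⟩⟩
      · show ev (mkX z hz) ∈ Ioo ((c:ℝ)) d \ J (ev x')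
        rw [ev_mkX]
        exact ⟨hzIoo, fun h => hzT (subset_closure h)⟩
      · intro hmem
        have h2 : ev (mkX z hz) ∉ J (ev x) := hmem.2
        rw [ev_mkX] at h2
        exact h2 hzJ
    · -- x' not in K but x' ∈ U : U avoids K? no -- x ∈ V and V avoids K, but ev x ∈ K
      exfalso
      have : ev x ∈ Ioo ((c:ℝ)) d := hxV.1
      have h2 : ev x ∈ Ioo ((c:ℝ)) d ∩ K := ⟨this, hK⟩
      rw [hKd'] at h2
      exact notMem_empty _ h2
  · -- x not in K
    exfalso
    have : ev x' ∈ Ioo ((a:ℝ)) b := hx'U.1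
    rcases hV with ⟨hK', c, d, hcd, rfl⟩ | ⟨hK', c, d, hcd, hKd', rfl⟩
    · -- x' ∈ K, but U avoids K
      have h2 : ev x' ∈ Ioo ((a:ℝ)) b ∩ K := ⟨this, hK'⟩
      rw [hKd] at h2
      exact notMem_empty _ h2
    · -- both in Z
      have hxZ : ev x ∈ Zset := ((ev_cases x).resolve_left hK).1
      have hx'Z : ev x' ∈ Zset := ((ev_cases x').resolve_left hK').1
      rcases Nat.lt_trichotomy (rk (ev x)) (rk (ev x')) with h | h | h
      · -- x ∈ V removes zf k for k < rk x', and ev x = zf (rk x)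
        exact hxV.2 ⟨rk (ev x), h, (zf_rk hxZ).symm⟩
      · exact hevne (by rw [← zf_rk hxZ, ← zf_rk hx'Z, h])
      · exact hx'U.2 ⟨rk (ev x'), h, (zf_rk hx'Z).symm⟩

lemma U1_irreducible : IsIrreducibleDecomp U1 := by
  refine ⟨U1_basis, U1_nbhd, ?_⟩
  intro x hcon
  -- pick V₀ ∈ U1 x
  obtain ⟨V₀, hV₀, -⟩ := (U1_nbhd x).2 univ isOpen_univ (mem_univ x)
  obtain ⟨hV₀o, hxV₀⟩ := U1_open_mem hV₀
  obtain ⟨U, hU, hxU, hUV₀⟩ := hcon V₀ hV₀o hxV₀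
  simp only [mem_iUnion, mem_setOf_eq] at hU
  obtain ⟨x', hx'ne, hUx'⟩ := hU
  have hx'U : x' ∈ U := (U1_open_mem hUx').2
  obtain ⟨w, hwU, hwV₀⟩ := U1_star x x' (Ne.symm hx'ne) V₀ hV₀ U hUx' hxU (hUV₀ hx'U)
  exact hwV₀ (hUV₀ hwU)


/-! ### the two subspaces -/

def Yp : Set XC := {x | ev x ∈ K}
def Zp : Set XC := {x | ev x ∉ K}

lemma Yp_union_Zp : Yp ∪ Zp = Set.univ := by
  ext x; simp only [Yp, Zp, mem_union, mem_setOf_eq, mem_univ, iff_true]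
  exact em _

lemma tE_open_pre {u : Set ℝ} (hu : IsOpen u) : IsOpen[tE] (ev ⁻¹' u) := ⟨u, hu, rfl⟩

lemma agreeY :
    TopologicalSpace.induced ((↑) : ↥Yp → XC) tXC
      = TopologicalSpace.induced ((↑) : ↥Yp → XC) tE := by
  apply le_antisymm
  · exact induced_mono tXC_le_tE
  · rw [show tXC = generateFrom gens from rfl, induced_generateFrom_eq]
    apply le_generateFrom
    rintro s ⟨G, hG, rfl⟩
    rcases hG with ⟨a, b, rfl⟩ | ⟨a, b, y, hyK, rfl⟩
    · exact ⟨gI a b, tE_open_pre isOpen_Ioo, rfl⟩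
    · refine ⟨ev ⁻¹' (Ioo ((a:ℝ)) b), tE_open_pre isOpen_Ioo, ?_⟩
      ext w
      simp only [mem_preimage, gY, mem_diff]
      refine ⟨fun h => ⟨h, fun hJ => ?_⟩, fun h => h.1⟩
      have h2 : ev (w : XC) ∈ J y ∩ K := ⟨hJ, w.2⟩
      rw [J_disjoint_K] at h2
      exact notMem_empty _ h2

lemma agreeZ :
    TopologicalSpace.induced ((↑) : ↥Zp → XC) tXC
      = TopologicalSpace.induced ((↑) : ↥Zp → XC) tE := by
  apply le_antisymm
  · exact induced_mono tXC_le_tE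
  · rw [show tXC = generateFrom gens from rfl, induced_generateFrom_eq]
    apply le_generateFrom
    rintro s ⟨G, hG, rfl⟩
    rcases hG with ⟨a, b, rfl⟩ | ⟨a, b, y, hyK, rfl⟩
    · exact ⟨gI a b, tE_open_pre isOpen_Ioo, rfl⟩
    · refine ⟨ev ⁻¹' (Ioo ((a:ℝ)) b ∩ (closure (J y))ᶜ),
        tE_open_pre (isOpen_Ioo.inter isClosed_closure.isOpen_compl), ?_⟩
      ext w
      simp only [mem_preimage, gY, mem_diff, mem_inter_iff, mem_compl_iff]
      constructor
      · rintro ⟨h1, h2⟩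
        exact ⟨h1, fun hJ => h2 (subset_closure hJ)⟩
      · rintro ⟨h1, h2⟩
        refine ⟨h1, not_mem_closure_J (ev_irr _) (fun he => ?_) h2⟩
        exact w.2 (he ▸ hyK)

/-! ### cardinal functions -/

lemma mk_XC : #XC = 2 ^ ℵ₀ := X_card

instance : Nonempty XC := by
  obtain ⟨p, q, _, hpq, _, hK⟩ := K_nwd (show (0:ℝ) < 1 by norm_num)
  obtain ⟨z, hz, _⟩ := Z_dense hpq hK
  exact ⟨mkX z hz⟩

lemma U1_countable (x : XC) : (U1 x).Countable := by
  have : U1 x ⊆ (range fun p : ℚ × ℚ => gY p.1 p.2 (ev x)) ∪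
      (range fun p : ℚ × ℚ => gI p.1 p.2 \ Fset (rk (ev x))) := by
    rintro S (⟨-, a, b, -, rfl⟩ | ⟨-, a, b, -, -, rfl⟩)
    · exact Or.inl ⟨(a, b), rfl⟩
    · exact Or.inr ⟨(a, b), rfl⟩
  exact ((countable_range _).union (countable_range _)).mono this

lemma charAt_le (x : XC) : charAt x ≤ ℵ₀ := by
  have hmem : #↥(U1 x) ∈ {c : Cardinal | ∃ B : Set (Set XC), NbhdBasisAt B x ∧ c = #↥B} :=
    ⟨U1 x, U1_nbhd x, rfl⟩
  refine (csInf_le' hmem).trans ?_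
  exact mk_le_aleph0_iff.2 (countable_coe_iff.2 (U1_countable x))

lemma nbhd_basis_infinite {x : XC} {B : Set (Set XC)} (hB : NbhdBasisAt B x) :
    ¬ B.Finite := by
  intro hfin
  have hW : IsOpen (⋂₀ B) := hfin.isOpen_sInter (fun U hU => (hB.1 U hU).1)
  have hxW : x ∈ ⋂₀ B := mem_sInter.2 fun U hU => (hB.1 U hU).2
  obtain ⟨w, hwW, hwx⟩ := not_isolated hW hxW
  obtain ⟨U, hU, hUV⟩ := hB.2 {w}ᶜ (singleton_closed w).isOpen_compl
    (fun h => hwx (mem_singleton_iff.1 h).symm)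
  exact hUV (mem_sInter.1 hwW U hU) rfl

lemma charAt_eq (x : XC) : charAt x = ℵ₀ := by
  have hne : {c : Cardinal | ∃ B : Set (Set XC), NbhdBasisAt B x ∧ c = #↥B}.Nonempty :=
    ⟨#↥(U1 x), U1 x, U1_nbhd x, rfl⟩
  refine le_antisymm (charAt_le x) (le_csInf hne ?_)
  rintro c ⟨B, hB, rfl⟩
  by_contra hlt
  rw [not_le] at hlt
  exact nbhd_basis_infinite hB (lt_aleph0_iff_set_finite.1 hlt)

lemma character_eq : character XC = ℵ₀ := by
  unfold character
  have : ∀ x : XC, charAt x = ℵ₀ := charAt_eq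
  simp only [this]
  exact ciSup_const

/-! #### net weight -/

def Net : Set (Set XC) :=
  {S | (∃ a b : ℚ, S = gI a b) ∨ (∃ a b : ℚ, S = gI a b ∩ Yp)}

lemma Net_network : IsNetwork Net := by
  intro x U hU hx
  obtain ⟨a, b, h1, h2⟩ := exists_gCan_sub hU hx
  by_cases hK : ev x ∈ K
  · refine ⟨gI a b ∩ Yp, Or.inr ⟨a, b, rfl⟩, ⟨h1, hK⟩, ?_⟩
    rintro w ⟨hw1, hw2⟩
    apply h2
    rw [gCan_eq_pos hK]
    refine ⟨hw1, fun hJ => ?_⟩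
    have h3 : ev w ∈ J (ev x) ∩ K := ⟨hJ, hw2⟩
    rw [J_disjoint_K] at h3
    exact notMem_empty _ h3
  · refine ⟨gI a b, Or.inl ⟨a, b, rfl⟩, h1, ?_⟩
    intro w hw
    apply h2
    rw [gCan_eq_neg hK]
    exact hw

lemma Net_countable : Net.Countable := by
  have : Net ⊆ (range fun p : ℚ × ℚ => gI p.1 p.2) ∪
      (range fun p : ℚ × ℚ => gI p.1 p.2 ∩ Yp) := by
    rintro S (⟨a, b, rfl⟩ | ⟨a, b, rfl⟩)
    · exact Or.inl ⟨(a, b), rfl⟩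
    · exact Or.inr ⟨(a, b), rfl⟩
  exact ((countable_range _).union (countable_range _)).mono this

lemma network_infinite {N : Set (Set XC)} (hN : IsNetwork N) : ¬ N.Finite := by
  intro hfin
  have hinj : Function.Injective (fun x : XC => {M : ↥N | x ∈ (M : Set XC)}) := by
    intro x x' hxx'
    by_contra hne
    obtain ⟨M, hMN, hxM, hMV⟩ := hN x {x'}ᶜ (singleton_closed x').isOpen_compl
      (fun h => hne (mem_singleton_iff.1 h))
    have h2 := congrArg (fun S => (⟨M, hMN⟩ : ↥N) ∈ S) hxx'
    simp only [eq_iff_iff, mem_setOf_eq] at h2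
    exact hMV (h2.mp hxM) rfl
  have hle : #XC ≤ #(Set ↥N) := mk_le_of_injective hinj
  rw [mk_XC, mk_set] at hle
  have hNfin : #↥N < ℵ₀ := lt_aleph0_iff_set_finite.2 hfin
  have h2 : (2 : Cardinal) ^ #↥N < ℵ₀ := power_lt_aleph0 (nat_lt_aleph0 2) hNfin
  exact absurd (hle.trans_lt h2) (not_lt.2 (cantor ℵ₀).le)

lemma netWeight_eq : netWeight XC = ℵ₀ := by
  have hmem : #↥Net ∈ {c : Cardinal | ∃ N : Set (Set XC), IsNetwork N ∧ c = #↥N} :=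
    ⟨Net, Net_network, rfl⟩
  apply le_antisymm
  · exact (csInf_le' hmem).trans
      (mk_le_aleph0_iff.2 (countable_coe_iff.2 Net_countable))
  · refine le_csInf ⟨#↥Net, hmem⟩ ?_
    rintro c ⟨N, hN, rfl⟩
    by_contra hlt
    rw [not_le] at hlt
    exact network_infinite hN (lt_aleph0_iff_set_finite.1 hlt)

/-! #### weight -/

lemma mk_Yp : 2 ^ ℵ₀ ≤ #↥Yp := by
  rw [← K_card]
  refine mk_le_of_injective (f := fun k : ↥K => (⟨(⟨(k:ℝ), Or.inl k.2⟩ : ↥Xset), k.2⟩ : ↥Yp)) ?_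
  intro k k' h
  apply Subtype.ext
  have := congrArg (fun y : ↥Yp => ev (y : XC)) h
  exact this

lemma gens_card : #↥gens ≤ 2 ^ ℵ₀ := by
  have hsub : gens ⊆ (range fun p : ℚ × ℚ => gI p.1 p.2) ∪
      (range fun t : (ℚ × ℚ) × ↥K => gY t.1.1 t.1.2 (t.2 : ℝ)) := by
    rintro S (⟨a, b, rfl⟩ | ⟨a, b, y, hy, rfl⟩)
    · exact Or.inl ⟨(a, b), rfl⟩
    · exact Or.inr ⟨((a, b), ⟨y, hy⟩), rfl⟩
  have hC : ℵ₀ ≤ (2 : Cardinal) ^ ℵ₀ := (cantor ℵ₀).le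
  calc #↥gens ≤ #↥((range fun p : ℚ × ℚ => gI p.1 p.2) ∪
      (range fun t : (ℚ × ℚ) × ↥K => gY t.1.1 t.1.2 (t.2 : ℝ))) := mk_le_mk_of_subset hsub
    _ ≤ #↥(range fun p : ℚ × ℚ => gI p.1 p.2) +
        #↥(range fun t : (ℚ × ℚ) × ↥K => gY t.1.1 t.1.2 (t.2 : ℝ)) := mk_union_le _ _
    _ ≤ ℵ₀ + #((ℚ × ℚ) × ↥K) := by
        refine add_le_add (mk_range_le.trans ?_) mk_range_le
        exact mk_le_aleph0
    _ ≤ ℵ₀ + ℵ₀ * (2 ^ ℵ₀) := by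
        refine add_le_add le_rfl ?_
        rw [mk_prod, lift_id, lift_id, K_card]
        exact mul_le_mul' mk_le_aleph0 le_rfl
    _ ≤ 2 ^ ℵ₀ + 2 ^ ℵ₀ * (2 ^ ℵ₀) := add_le_add hC (mul_le_mul' hC le_rfl)
    _ = 2 ^ ℵ₀ + 2 ^ (ℵ₀ + ℵ₀) := by rw [power_add]
    _ = 2 ^ ℵ₀ + 2 ^ ℵ₀ := by rw [aleph0_add_aleph0]
    _ = 2 ^ ℵ₀ := add_eq_self hC

lemma fiber_countable {B : Set (Set XC)} (hB : IsTopologicalBasis B)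
    {V : ↥Yp → Set XC} (hVform : ∀ y, ∃ p : ℚ × ℚ, V y = gY p.1 p.2 (ev (y : XC)))
    {bb : ↥Yp → Set XC} (hbbB : ∀ y, bb y ∈ B) (hbbmem : ∀ y, (y : XC) ∈ bb y)
    (hbbsub : ∀ y, bb y ⊆ V y) (b₀ : Set XC) :
    #{y : ↥Yp // bb y = b₀} ≤ ℵ₀ := by
  by_contra hgt
  rw [not_le] at hgt
  -- every y in the fiber gives a rational pair
  have hdata : ∀ y : {y : ↥Yp // bb y = b₀}, ∃ p : ℚ × ℚ,
      ev ((y : ↥Yp) : XC) ∈ Ioo ((p.1 : ℝ)) p.2 ∧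
        gY p.1 p.2 (ev ((y : ↥Yp) : XC)) ⊆ b₀ := by
    rintro ⟨y, hy⟩
    have hyb : (y : XC) ∈ b₀ := hy ▸ hbbmem y
    have hysub : b₀ ⊆ V y := hy ▸ hbbsub y
    have hb₀open : IsOpen b₀ := hB.isOpen (hy ▸ hbbB y)
    obtain ⟨G, hG, hyG, hGb⟩ := gens_basis.exists_subset_of_mem_open hyb hb₀open
    obtain ⟨p, hVp⟩ := hVform y
    have hyVy : (y : XC) ∈ V y := hysub hyb
    have hynotJ : ev (y : XC) ∉ J (ev (y : XC)) := by
      rw [hVp] at hyVy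
      exact hyVy.2
    rcases hG with ⟨c, d, rfl⟩ | ⟨c, d, y'', hy''K, rfl⟩
    · -- interval type: contradiction
      exfalso
      obtain ⟨z, hz, hzIoo, hzJ, -⟩ :=
        Z_point (ev (y : XC)) (show ev (y:XC) ∈ Ioo ((c:ℝ)) d from hyG)
          isClosed_empty (notMem_empty _)
      have hw : mkX z hz ∈ V y := hysub (hGb (show ev (mkX z hz) ∈ Ioo ((c:ℝ)) d from
        (ev_mkX z hz).symm ▸ hzIoo))
      rw [hVp] at hw
      have : ev (mkX z hz) ∉ J (ev (y:XC)) := hw.2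
      rw [ev_mkX] at this
      exact this hzJ
    · by_cases hcase : ev (y : XC) = y''
      · refine ⟨(c, d), hyG.1, ?_⟩
        rw [hcase]
        exact hGb
      · exfalso
        have hyT : ev (y : XC) ∉ closure (J y'') :=
          not_mem_closure_J (ev_irr _) hcase hyG.2
        obtain ⟨z, hz, hzIoo, hzJ, hzT⟩ :=
          Z_point (ev (y : XC)) hyG.1 isClosed_closure hyT
        have hw : mkX z hz ∈ V y := hysub (hGb (show ev (mkX z hz) ∈
            Ioo ((c:ℝ)) d \ J y'' from by
          rw [ev_mkX]
          exact ⟨hzIoo, fun h => hzT (subset_closure h)⟩))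
        rw [hVp] at hw
        have : ev (mkX z hz) ∉ J (ev (y:XC)) := hw.2
        rw [ev_mkX] at this
        exact this hzJ
  choose ψ hψ1 hψ2 using hdata
  have hψinj : ¬ Function.Injective ψ := by
    intro hinj
    exact absurd (mk_le_of_injective hinj |>.trans mk_le_aleph0) (not_le.2 hgt)
  rw [Function.not_injective_iff] at hψinj
  obtain ⟨y, y', hψeq, hyne⟩ := hψinj
  -- derive contradiction
  have hevne : ev ((y : ↥Yp) : XC) ≠ ev ((y' : ↥Yp) : XC) := by
    intro h
    exact hyne (Subtype.ext (Subtype.ext (ev_inj h)))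
  have hy'b : ((y' : ↥Yp) : XC) ∈ b₀ := by
    have h := hbbmem (y' : ↥Yp); rwa [y'.2] at h
  have hy'subV : b₀ ⊆ V (y : ↥Yp) := by
    have h := hbbsub (y : ↥Yp); rwa [y.2] at h
  have hy'subV' : b₀ ⊆ V (y' : ↥Yp) := by
    have h := hbbsub (y' : ↥Yp); rwa [y'.2] at h
  obtain ⟨p, hVp⟩ := hVform (y : ↥Yp)
  -- y' ∈ b₀ ⊆ V y, so ev y' ∉ J (ev y)
  have hy'notJ : ev ((y' : ↥Yp) : XC) ∉ J (ev ((y : ↥Yp) : XC)) := by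
    have := hy'subV hy'b
    rw [hVp] at this
    exact this.2
  have hy'T : ev ((y' : ↥Yp) : XC) ∉ closure (J (ev ((y : ↥Yp) : XC))) :=
    not_mem_closure_J (ev_irr _) (Ne.symm hevne) hy'notJ
  -- ev y' ∈ Ioo (ψ y) = Ioo (ψ y')
  have hy'Ioo : ev ((y' : ↥Yp) : XC) ∈ Ioo (((ψ y).1 : ℝ)) (ψ y).2 := by
    rw [hψeq]; exact hψ1 y'
  obtain ⟨z, hz, hzIoo, hzJ, hzT⟩ :=
    Z_point (ev ((y' : ↥Yp) : XC)) hy'Ioo isClosed_closure hy'T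
  -- w := mkX z is in gY (ψ y) (ev y) ⊆ b₀ ⊆ V y', so z ∉ J (ev y'): contra
  have hw : mkX z hz ∈ gY (ψ y).1 (ψ y).2 (ev ((y : ↥Yp) : XC)) := by
    show ev (mkX z hz) ∈ Ioo _ _ \ J _
    rw [ev_mkX]
    exact ⟨hzIoo, fun h => hzT (subset_closure h)⟩
  have hwb : mkX z hz ∈ b₀ := hψ2 y hw
  have := hy'subV' hwb
  obtain ⟨p', hVp'⟩ := hVform (y' : ↥Yp)
  rw [hVp'] at this
  have h2 : ev (mkX z hz) ∉ J (ev ((y' : ↥Yp) : XC)) := this.2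
  rw [ev_mkX] at h2
  exact h2 hzJ

lemma basis_card {B : Set (Set XC)} (hB : IsTopologicalBasis B) : 2 ^ ℵ₀ ≤ #↥B := by
  have hchoice : ∀ y : ↥Yp, ∃ p : ℚ × ℚ, ev (y : XC) ∈ Ioo ((p.1 : ℝ)) p.2 := by
    intro y
    obtain ⟨a, ha⟩ := exists_rat_lt (ev (y : XC))
    obtain ⟨b, hb⟩ := exists_rat_gt (ev (y : XC))
    exact ⟨(a, b), ha, hb⟩
  choose pa hpa using hchoice
  set V : ↥Yp → Set XC := fun y => gY (pa y).1 (pa y).2 (ev (y : XC)) with hVdef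
  have hVform : ∀ y, ∃ p : ℚ × ℚ, V y = gY p.1 p.2 (ev (y : XC)) := fun y => ⟨pa y, rfl⟩
  have hVopen : ∀ y, IsOpen (V y) := fun y => gens_open (Or.inr ⟨_, _, _, y.2, rfl⟩)
  have hVmem : ∀ y, (y : XC) ∈ V y := by
    intro y
    refine ⟨hpa y, fun hJ => ?_⟩
    have h2 : ev (y : XC) ∈ J (ev (y : XC)) ∩ K := ⟨hJ, y.2⟩
    rw [J_disjoint_K] at h2
    exact notMem_empty _ h2
  have hBy : ∀ y : ↥Yp, ∃ b, b ∈ B ∧ (y : XC) ∈ b ∧ b ⊆ V y := by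
    intro y
    obtain ⟨b, hb, h1, h2⟩ := hB.exists_subset_of_mem_open (hVmem y) (hVopen y)
    exact ⟨b, hb, h1, h2⟩
  choose bb hbbB hbbmem hbbsub using hBy
  have hfib := fiber_countable hB hVform hbbB hbbmem hbbsub
  -- #Yp ≤ #B * ℵ₀
  set bb' : ↥Yp → ↥B := fun y => ⟨bb y, hbbB y⟩ with hbb'
  have hYle : #↥Yp ≤ #↥B * ℵ₀ := by
    have e1 : #↥Yp = #(Σ b : ↥B, {y : ↥Yp // bb' y = b}) :=
      (mk_congr (Equiv.sigmaFiberEquiv bb')).symm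
    rw [e1, mk_sigma]
    calc (sum fun b : ↥B => #{y : ↥Yp // bb' y = b})
        ≤ sum fun _ : ↥B => ℵ₀ := by
          refine sum_le_sum _ _ fun b => ?_
          have e2 : {y : ↥Yp // bb' y = b} ≃ {y : ↥Yp // bb y = (b : Set XC)} :=
            Equiv.subtypeEquivRight fun y => by
              rw [hbb']; exact ⟨fun h => congrArg Subtype.val h, fun h => Subtype.ext h⟩
          rw [mk_congr e2]
          exact hfib (b : Set XC)
      _ = #↥B * ℵ₀ := sum_const' _ _
  have h2 : (2:Cardinal) ^ ℵ₀ ≤ #↥B * ℵ₀ := mk_Yp.trans hYle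
  have h3 : #↥B * ℵ₀ ≤ max (max (#↥B) ℵ₀) ℵ₀ := mul_le_max _ _
  rcases max_le_iff.1 (le_refl (max (max (#↥B) ℵ₀) ℵ₀)) with - 
  have h4 : (2:Cardinal) ^ ℵ₀ ≤ max (max (#↥B) ℵ₀) ℵ₀ := h2.trans h3
  rcases le_max_iff.1 h4 with h5 | h5
  · rcases le_max_iff.1 h5 with h6 | h6
    · exact h6
    · exact absurd h6 (not_le.2 (cantor ℵ₀))
  · exact absurd h5 (not_le.2 (cantor ℵ₀))

lemma weight_eq : weight XC = 2 ^ ℵ₀ := by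
  have hmem : #↥gens ∈ {c : Cardinal | ∃ B : Set (Set XC), IsTopologicalBasis B ∧ c = #↥B} :=
    ⟨gens, gens_basis, rfl⟩
  apply le_antisymm
  · exact (csInf_le' hmem).trans gens_card
  · refine le_csInf ⟨#↥gens, hmem⟩ ?_
    rintro c ⟨B, hB, rfl⟩
    exact basis_card hB

end St16

end



/-- there is a set `X` of irrationals of size `2^ω` and a 0-dimensional
first countable refinement `τ` of the Euclidean topology on `X` such that `X = Y ∪ Z`
with `τ` agreeing with the Euclidean topology on `Y` and on `Z`, and `(X,τ)` has an
irreducible base; consequently `χ(X) = nw(X) = ω` while `w(X) = 2^ω`. -/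
theorem statement16 :
    ∃ X : Set ℝ, (∀ x ∈ X, Irrational x) ∧ #X = 2 ^ ℵ₀ ∧
      ∃ τ : TopologicalSpace X,
        τ ≤ (instTopologicalSpaceSubtype : TopologicalSpace X) ∧
        @FirstCountableTopology X τ ∧
        (∃ B : Set (Set X), @TopologicalSpace.IsTopologicalBasis X τ B ∧
          ∀ U ∈ B, @IsClopen X τ U) ∧
        (∃ Y Z : Set X, Y ∪ Z = Set.univ ∧
          TopologicalSpace.induced ((↑) : Y → X) τ =
            TopologicalSpace.induced ((↑) : Y → X)
              (instTopologicalSpaceSubtype : TopologicalSpace X) ∧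
          TopologicalSpace.induced ((↑) : Z → X) τ =
            TopologicalSpace.induced ((↑) : Z → X)
              (instTopologicalSpaceSubtype : TopologicalSpace X)) ∧
        @HasIrreducibleBase X τ ∧
        @character X τ = ℵ₀ ∧ @netWeight X τ = ℵ₀ ∧ @weight X τ = 2 ^ ℵ₀ := by
  refine ⟨St16.Xset, St16.X_irr, St16.X_card, St16.tXC, ?_, ?_, ?_, ?_, ?_, ?_, ?_, ?_⟩
  · exact St16.tXC_le_tE
  · exact St16.firstCountableXC
  · exact ⟨St16.gens, St16.gens_basis, fun U hU => St16.gens_clopen hU⟩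
  · exact ⟨St16.Yp, St16.Zp, St16.Yp_union_Zp, St16.agreeY, St16.agreeZ⟩
  · exact ⟨St16.U1, St16.U1_irreducible⟩
  · exact St16.character_eq
  · exact St16.netWeight_eq
  · exact St16.weight_eq
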